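/- Let 0 < d < n be integers and set H(i) = min(i, d) for 0 ≤ i ≤ n. Let S be the set of functions P : {0, 1, …, n} → ℚ such that P(0) = 0, P(n) = d, the increments P(i+1) − P(i) are weakly decreasing in i (concavity), P(i) ≤ H(i) for all i, and for every 0 < i < n at which the increment changes (P(i+1) − P(i) ≠ P(i) − P(i−1)) one has P(i) = H(i). Then S has exactly d(n−d) + 1 elements. -/

import Mathlib

namespace Stmt1

def g (d a b i : ℕ) : ℚ :=
  if i ≤ a then (i : ℚ) else if b ≤ i then (d : ℚ)
  else (a : ℚ) + ((d : ℚ) - a) * ((i : ℚ) - a) / ((b : ℚ) - a)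

lemma g_low {d a b i : ℕ} (h : i ≤ a) : g d a b i = i := if_pos h

lemma g_high {d a b i : ℕ} (had : a ≤ d) (hdb : d ≤ b) (h : b ≤ i) :
    g d a b i = d := by
  unfold g
  rcases le_or_gt i a with h1 | h1
  · have hid : i = d := by omega
    rw [if_pos h1, hid]
  · rw [if_neg (by omega), if_pos h]

lemma g_mid {d a b i : ℕ} (ha : a ≤ i) (hb : i ≤ b) :
    g d a b i = (a : ℚ) + ((d : ℚ) - a) * ((i : ℚ) - a) / ((b : ℚ) - a) := by
  unfold g
  rcases le_or_gt i a with h1 | h1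
  · have hia : i = a := le_antisymm h1 ha
    subst hia
    rw [if_pos le_rfl, sub_self, mul_zero, zero_div, add_zero]
  · rw [if_neg (by omega)]
    rcases le_or_gt b i with h2 | h2
    · have hib : i = b := le_antisymm hb h2
      subst hib
      have hne : (i : ℚ) - a ≠ 0 := by
        have : (a : ℚ) < i := by exact_mod_cast h1
        linarith
      rw [if_pos le_rfl]
      field_simp
      ring
    · rw [if_neg (by omega)]

lemma slope_low {d a b i : ℕ} (h : i + 1 ≤ a) :
    g d a b (i+1) - g d a b i = 1 := by
  rw [g_low h, g_low (by omega)]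
  push_cast; ring

lemma slope_mid {d a b i : ℕ} (ha : a ≤ i) (hb : i + 1 ≤ b) :
    g d a b (i+1) - g d a b i = ((d:ℚ) - a) / ((b:ℚ) - a) := by
  have hab : a < b := by omega
  have hne : (b : ℚ) - a ≠ 0 := by
    have : (a:ℚ) < b := by exact_mod_cast hab
    linarith
  rw [g_mid (by omega) hb, g_mid ha (by omega)]
  push_cast
  field_simp
  ring

lemma slope_high {d a b i : ℕ} (had : a ≤ d) (hdb : d ≤ b) (h : b ≤ i) :
    g d a b (i+1) - g d a b i = 0 := by
  rw [g_high had hdb (by omega), g_high had hdb h, sub_self]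

/-- admissible parameter pairs -/
def W (n d a b : ℕ) : Prop := (a < d ∧ d < b ∧ b ≤ n) ∨ (a = d ∧ b = d)

variable {n d a b : ℕ}

lemma W.had (h : W n d a b) : a ≤ d := by rcases h with ⟨h,_,_⟩|⟨h,_⟩ <;> omega
lemma W.hdb (h : W n d a b) : d ≤ b := by rcases h with ⟨_,h,_⟩|⟨_,h⟩ <;> omega
lemma W.hbn (h : W n d a b) (hdn : d ≤ n) : b ≤ n := by
  rcases h with ⟨_,_,h⟩|⟨_,h⟩ <;> omega

lemma sigma_nonneg (h : W n d a b) : 0 ≤ ((d:ℚ) - a) / ((b:ℚ) - a) := by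
  rcases h with ⟨h1, h2, _⟩ | ⟨h1, h2⟩
  · apply div_nonneg
    · have : (a:ℚ) ≤ d := by exact_mod_cast h1.le
      linarith
    · have : (a:ℚ) ≤ b := by exact_mod_cast (by omega : a ≤ b)
      linarith
  · subst h1; subst h2; simp

lemma sigma_le_one (h : W n d a b) : ((d:ℚ) - a) / ((b:ℚ) - a) ≤ 1 := by
  rcases h with ⟨h1, h2, _⟩ | ⟨h1, h2⟩
  · rw [div_le_one (by
      have : (a:ℚ) < b := by exact_mod_cast (by omega : a < b)
      linarith)]
    have : (d:ℚ) ≤ b := by exact_mod_cast h2.le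
    linarith
  · subst h1; subst h2; simp

lemma slope_anti_g (h : W n d a b) {i j : ℕ} (hij : i ≤ j) :
    g d a b (j+1) - g d a b j ≤ g d a b (i+1) - g d a b i := by
  have had := h.had; have hdb := h.hdb
  have h0 := sigma_nonneg h; have h1 := sigma_le_one h
  rcases le_or_gt (i+1) a with hi1 | hi1
  · rw [slope_low hi1]
    rcases le_or_gt (j+1) a with hj1 | hj1
    · rw [slope_low hj1]
    · rcases le_or_gt b j with hj3 | hj3
      · rw [slope_high had hdb hj3]; linarith
      · rw [slope_mid (i := j) (by omega) (by omega)]; linarith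
  · rcases le_or_gt b i with hi3 | hi3
    · rw [slope_high had hdb hi3, slope_high had hdb (by omega)]
    · rw [slope_mid (i := i) (by omega) (by omega)]
      rcases le_or_gt b j with hj3 | hj3
      · rw [slope_high had hdb hj3]; exact h0
      · rw [slope_mid (i := j) (by omega) (by omega)]

lemma g_le_min (h : W n d a b) (i : ℕ) : g d a b i ≤ min (i:ℚ) (d:ℚ) := by
  have had := h.had; have hdb := h.hdb
  rcases le_or_gt i a with h1 | h1
  · rw [g_low h1]
    have : (i:ℚ) ≤ d := by exact_mod_cast le_trans h1 had
    exact le_min le_rfl this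
  · rcases le_or_gt b i with h2 | h2
    · rw [g_high had hdb h2]
      have : (d:ℚ) ≤ i := by exact_mod_cast le_trans hdb h2
      exact le_min this le_rfl
    · have hab : a < b := by omega
      rw [g_mid (by omega) (by omega)]
      have hbaQ : (0:ℚ) < (b:ℚ) - a := by
        have : (a:ℚ) < b := by exact_mod_cast hab
        linarith
      have hia : (0:ℚ) ≤ (i:ℚ) - a := by
        have : (a:ℚ) ≤ i := by exact_mod_cast h1.le
        linarith
      have hda : (0:ℚ) ≤ (d:ℚ) - a := by
        have : (a:ℚ) ≤ d := by exact_mod_cast had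
        linarith
      have hdb' : (d:ℚ) - a ≤ (b:ℚ) - a := by
        have : (d:ℚ) ≤ b := by exact_mod_cast hdb
        linarith
      have hib : (i:ℚ) - a ≤ (b:ℚ) - a := by
        have : (i:ℚ) ≤ b := by exact_mod_cast h2.le
        linarith
      apply le_min
      · have key : ((d:ℚ) - a) * ((i:ℚ) - a) / ((b:ℚ) - a) ≤ (i:ℚ) - a := by
          rw [div_le_iff₀ hbaQ]; nlinarith
        linarith
      · have key : ((d:ℚ) - a) * ((i:ℚ) - a) / ((b:ℚ) - a) ≤ (d:ℚ) - a := by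
          rw [div_le_iff₀ hbaQ]; nlinarith
        linarith

lemma g_bp (h : W n d a b) (i : ℕ)
    (hne : g d a b (i+2) - g d a b (i+1) ≠ g d a b (i+1) - g d a b i) :
    g d a b (i+1) = min ((i:ℚ)+1) (d:ℚ) := by
  have had := h.had; have hdb := h.hdb
  rcases le_or_gt (i+1) a with h1 | h1
  · rw [g_low h1]
    have hle : ((i:ℚ)+1) ≤ d := by exact_mod_cast le_trans h1 had
    rw [min_eq_left hle]; push_cast; ring
  · rcases le_or_gt b (i+1) with h2 | h2
    · rw [g_high had hdb h2]
      have hle : (d:ℚ) ≤ (i:ℚ)+1 := by exact_mod_cast le_trans hdb h2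
      rw [min_eq_right hle]
    · exact absurd (by
        rw [slope_mid (i := i+1) (by omega) (by omega),
          slope_mid (i := i) (by omega) (by omega)]) hne

lemma g_eq_self_iff (h : W n d a b) (i : ℕ) : g d a b i = i ↔ i ≤ a := by
  constructor
  · intro hg
    by_contra hia
    push_neg at hia
    rcases le_or_gt b i with h2 | h2
    · rw [g_high h.had h.hdb h2] at hg
      have hdi : d < i := by rcases h with ⟨_,hh,_⟩|⟨hh,hh'⟩ <;> omega
      have : (d:ℚ) < i := by exact_mod_cast hdi
      linarith [hg]
    · rcases h with ⟨had, hdb', hbn⟩ | ⟨ha', hb'⟩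
      · rw [g_mid (by omega) (by omega)] at hg
        have hbaQ : (0:ℚ) < (b:ℚ) - a := by
          have : (a:ℚ) < b := by exact_mod_cast (by omega : a < b)
          linarith
        have c2 : (a:ℚ) < i := by exact_mod_cast hia
        have c3 : (d:ℚ) < b := by exact_mod_cast hdb'
        have key : ((d:ℚ) - a) * ((i:ℚ) - a) / ((b:ℚ) - a) < (i:ℚ) - a := by
          rw [div_lt_iff₀ hbaQ]; nlinarith
        linarith
      · omega
  · intro hi; rw [g_low hi]

lemma g_eq_d_iff (h : W n d a b) (i : ℕ) : g d a b i = d ↔ b ≤ i := by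
  constructor
  · intro hg
    by_contra hib
    push_neg at hib
    rcases le_or_gt i a with h1 | h1
    · rw [g_low h1] at hg
      have hid : i = d := by exact_mod_cast hg
      have ha' : a = d := by have := h.had; omega
      rcases h with ⟨hh,_,_⟩|⟨_,hb'⟩ <;> omega
    · rcases h with ⟨had, hdb', hbn⟩ | ⟨ha', hb'⟩
      · rw [g_mid (by omega) (by omega)] at hg
        have hbaQ : (0:ℚ) < (b:ℚ) - a := by
          have : (a:ℚ) < b := by exact_mod_cast (by omega : a < b)
          linarith
        have c1 : (a:ℚ) < d := by exact_mod_cast had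
        have c2 : (i:ℚ) < b := by exact_mod_cast hib
        have c3 : (a:ℚ) < i := by exact_mod_cast h1
        have key : ((d:ℚ) - a) * ((i:ℚ) - a) / ((b:ℚ) - a) < (d:ℚ) - a := by
          rw [div_lt_iff₀ hbaQ]; nlinarith
        linarith
      · omega
  · exact g_high h.had h.hdb

lemma g_injW (hdn : d ≤ n) (h : W n d a b) {a' b' : ℕ} (h' : W n d a' b')
    (heq : ∀ i, i ≤ n → g d a b i = g d a' b' i) : a = a' ∧ b = b' := by
  have haa : a ≤ a' := (g_eq_self_iff h' a).1
    (by rw [← heq a (le_trans h.had hdn)]; exact g_low le_rfl)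
  have haa' : a' ≤ a := (g_eq_self_iff h a').1
    (by rw [heq a' (le_trans h'.had hdn)]; exact g_low le_rfl)
  have hbb : b' ≤ b := (g_eq_d_iff h' b).1
    (by rw [← heq b (h.hbn hdn)]; exact g_high h.had h.hdb le_rfl)
  have hbb' : b ≤ b' := (g_eq_d_iff h b').1
    (by rw [heq b' (h'.hbn hdn)]; exact g_high h'.had h'.hdb le_rfl)
  omega

end Stmt1

/-- The set of concave polygons `P` from `(0,0)` to `(n,d)` lying below the Hodge polygon
`H(i) = min(i,d)`, all of whose breakpoints lie on `H`, has exactly `d(n-d)+1` elements. -/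
theorem stmt1 (n d : ℕ) (hd : 0 < d) (hdn : d < n) :
    Set.ncard {P : Fin (n + 1) → ℚ |
      P 0 = 0 ∧
      P (Fin.last n) = (d : ℚ) ∧
      (∀ i : ℕ, ∀ h : i + 1 < n,
        P ⟨i + 2, by omega⟩ - P ⟨i + 1, by omega⟩ ≤ P ⟨i + 1, by omega⟩ - P ⟨i, by omega⟩) ∧
      (∀ i : ℕ, ∀ h : i ≤ n, P ⟨i, by omega⟩ ≤ min (i : ℚ) (d : ℚ)) ∧
      (∀ i : ℕ, ∀ h : i + 1 < n,
        P ⟨i + 2, by omega⟩ - P ⟨i + 1, by omega⟩ ≠ P ⟨i + 1, by omega⟩ - P ⟨i, by omega⟩ →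
          P ⟨i + 1, by omega⟩ = min ((i : ℚ) + 1) (d : ℚ))} = d * (n - d) + 1 := by
  classical
  set T : Finset (ℕ × ℕ) := (Finset.range d ×ˢ Finset.Icc (d+1) n) ∪ {(d, d)} with hT
  set F : ℕ × ℕ → (Fin (n+1) → ℚ) := fun ab => fun i => Stmt1.g d ab.1 ab.2 i.val with hF
  have hWmem : ∀ ab ∈ T, Stmt1.W n d ab.1 ab.2 := by
    rintro ⟨a, b⟩ hab
    simp only [hT, Finset.mem_union, Finset.mem_product, Finset.mem_range,
      Finset.mem_Icc, Finset.mem_singleton, Prod.mk.injEq] at hab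
    unfold Stmt1.W
    rcases hab with ⟨h1, h2, h3⟩ | ⟨h1, h2⟩
    · left; exact ⟨h1, by omega, h3⟩
    · right; exact ⟨h1, h2⟩
  have key : {P : Fin (n + 1) → ℚ |
      P 0 = 0 ∧
      P (Fin.last n) = (d : ℚ) ∧
      (∀ i : ℕ, ∀ h : i + 1 < n,
        P ⟨i + 2, by omega⟩ - P ⟨i + 1, by omega⟩ ≤ P ⟨i + 1, by omega⟩ - P ⟨i, by omega⟩) ∧
      (∀ i : ℕ, ∀ h : i ≤ n, P ⟨i, by omega⟩ ≤ min (i : ℚ) (d : ℚ)) ∧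
      (∀ i : ℕ, ∀ h : i + 1 < n,
        P ⟨i + 2, by omega⟩ - P ⟨i + 1, by omega⟩ ≠ P ⟨i + 1, by omega⟩ - P ⟨i, by omega⟩ →
          P ⟨i + 1, by omega⟩ = min ((i : ℚ) + 1) (d : ℚ))} = ↑(T.image F) := by
    ext P
    simp only [Finset.coe_image, Set.mem_image, Finset.mem_coe, Set.mem_setOf_eq]
    constructor
    · rintro ⟨h0, hlast, hcc, hH, hbp⟩
      -- extend P to ℕ
      set Q : ℕ → ℚ := fun i => if h : i ≤ n then P ⟨i, by omega⟩ else d with hQdef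
      have hQ : ∀ i (h : i ≤ n), Q i = P ⟨i, by omega⟩ := by
        intro i h
        simp only [hQdef]
        rw [dif_pos h]
      have q0 : Q 0 = 0 := by
        rw [hQ 0 (by omega), show (⟨0, by omega⟩ : Fin (n+1)) = 0 from rfl, h0]
      have qn : Q n = d := by
        rw [hQ n le_rfl, show (⟨n, by omega⟩ : Fin (n+1)) = Fin.last n from rfl, hlast]
      have qcc : ∀ i, i + 1 < n → Q (i+2) - Q (i+1) ≤ Q (i+1) - Q i := by
        intro i h
        rw [hQ (i+2) (by omega), hQ (i+1) (by omega), hQ i (by omega)]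
        exact hcc i h
      have qH : ∀ i, i ≤ n → Q i ≤ min (i:ℚ) (d:ℚ) := by
        intro i h
        rw [hQ i h]; exact hH i h
      have qbp : ∀ i, i + 1 < n → Q (i+2) - Q (i+1) ≠ Q (i+1) - Q i →
          Q (i+1) = min ((i:ℚ)+1) (d:ℚ) := by
        intro i h hne
        rw [hQ (i+1) (by omega)]
        apply hbp i h
        rw [← hQ (i+2) (by omega), ← hQ (i+1) (by omega), ← hQ i (by omega)]
        exact hne
      -- antitone slopes
      have anti : ∀ j, j < n → ∀ i, i ≤ j → Q (j+1) - Q j ≤ Q (i+1) - Q i := by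
        intro j
        induction j with
        | zero =>
          intro _ i hi
          have : i = 0 := by omega
          subst this; exact le_rfl
        | succ k ih =>
          intro hk i hi
          rcases Nat.eq_or_lt_of_le hi with h | h
          · subst h; exact le_rfl
          · exact le_trans (qcc k hk) (ih (by omega) i (by omega))
      have slope_le_one : ∀ i, i < n → Q (i+1) - Q i ≤ 1 := by
        have hQ1 : Q 1 ≤ 1 := by
          have h1 := qH 1 (by omega)
          have h2 : min ((1:ℕ):ℚ) (d:ℚ) ≤ ((1:ℕ):ℚ) := min_le_left _ _
          push_cast at h1 h2 ⊢
          linarith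
        intro i hi
        have := anti i hi 0 (Nat.zero_le i)
        rw [q0, sub_zero] at this
        calc Q (i+1) - Q i ≤ Q 1 := this
          _ ≤ 1 := hQ1
      have slope_nonneg : ∀ i, i < n → 0 ≤ Q (i+1) - Q i := by
        have hm : n - 1 + 1 = n := by omega
        have last_nn : 0 ≤ Q (n-1+1) - Q (n-1) := by
          rw [hm, qn]
          have h1 := qH (n-1) (by omega)
          have h2 : min (((n-1:ℕ)):ℚ) (d:ℚ) ≤ (d:ℚ) := min_le_right _ _
          linarith
        intro i hi
        exact le_trans last_nn (anti (n-1) (by omega) i (by omega))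
      have tele : ∀ i j, i ≤ j → j ≤ n → Q j - Q i ≤ (j:ℚ) - (i:ℚ) := by
        intro i j hij
        induction j, hij using Nat.le_induction with
        | base => intro _; simp
        | succ k hk ih =>
          intro hkn
          have h1 := slope_le_one k (by omega)
          have h2 := ih (by omega)
          push_cast at h2 ⊢
          linarith
      have mono : ∀ i j, i ≤ j → j ≤ n → Q i ≤ Q j := by
        intro i j hij
        induction j, hij using Nat.le_induction with
        | base => intro _; exact le_rfl
        | succ k hk ih =>
          intro hkn
          have h1 := slope_nonneg k (by omega)
          have h2 := ih (by omega)
          linarith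
      -- the parameters
      set a : ℕ := Nat.findGreatest (fun i => Q i = (i:ℚ)) d with ha_def
      have ha_spec : Q a = (a:ℚ) :=
        Nat.findGreatest_spec (P := fun i => Q i = (i:ℚ)) (Nat.zero_le d)
          (by show Q 0 = ((0:ℕ):ℚ); rw [q0]; norm_num)
      have ha_le : a ≤ d := Nat.findGreatest_le d
      have ha_max : ∀ k, a < k → k ≤ d → Q k ≠ (k:ℚ) := by
        intro k h1 h2
        exact Nat.findGreatest_is_greatest h1 h2
      have hbex : ∃ i, Q i = (d:ℚ) := ⟨n, qn⟩
      set b : ℕ := Nat.find hbex with hb_def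
      have hb_spec : Q b = (d:ℚ) := Nat.find_spec hbex
      have hb_le_n : b ≤ n := Nat.find_min' hbex qn
      have hb_min : ∀ k, k < b → Q k ≠ (d:ℚ) := fun k hk => Nat.find_min hbex hk
      have hd_le_b : d ≤ b := by
        have h1 := qH b hb_le_n
        rw [hb_spec] at h1
        have h2 : (d:ℚ) ≤ (b:ℚ) := le_trans h1 (min_le_left _ _)
        exact_mod_cast h2
      have low_eq : ∀ i, i ≤ a → Q i = (i:ℚ) := by
        intro i hi
        have h1 := tele i a hi (by omega)
        rw [ha_spec] at h1
        have h2 := qH i (by omega)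
        have h3 : min ((i:ℕ):ℚ) ((d:ℕ):ℚ) ≤ (i:ℚ) := min_le_left _ _
        linarith
      have high_eq : ∀ i, b ≤ i → i ≤ n → Q i = (d:ℚ) := by
        intro i h1 h2
        have h3 := mono b i h1 h2
        rw [hb_spec] at h3
        have h4 := qH i h2
        have h5 : min ((i:ℕ):ℚ) ((d:ℕ):ℚ) ≤ (d:ℚ) := min_le_right _ _
        linarith
      rcases eq_or_lt_of_le ha_le with had | had
      · -- degenerate case : P is the Hodge polygon
        have hbd : b = d := by
          have hQd : Q d = (d:ℚ) := by rw [← had]; exact_mod_cast ha_spec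
          have : b ≤ d := Nat.find_min' hbex hQd
          omega
        refine ⟨(d, d), ?_, ?_⟩
        · simp [hT]
        · funext i
          obtain ⟨k, hk⟩ := i
          show Stmt1.g d d d k = P ⟨k, hk⟩
          rw [← hQ k (by omega)]
          rcases le_or_gt k d with h | h
          · rw [Stmt1.g_low h, low_eq k (by omega)]
          · rw [Stmt1.g_high le_rfl le_rfl h.le, high_eq k (by omega) (by omega)]
      · -- main case
        have hdb : d < b := by
          rcases eq_or_lt_of_le hd_le_b with h | h
          · exfalso
            apply ha_max d (by omega) le_rfl
            rw [← h] at hb_spec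
            rw [hb_spec, h]
          · exact h
        set σ : ℚ := Q (a+1) - Q a with hσ
        have const : ∀ j, a ≤ j → j < b → Q (j+1) - Q j = σ := by
          intro j hj
          induction j, hj using Nat.le_induction with
          | base => intro _; exact hσ.symm
          | succ k hk ih =>
            intro hkb
            have hkn : k + 1 < n := by omega
            by_cases hch : Q (k+2) - Q (k+1) = Q (k+1) - Q k
            · rw [hch]; exact ih (by omega)
            · exfalso
              have hmin := qbp k hkn hch
              rcases le_or_gt (k+1) d with hkd | hkd
              · have hminl : min ((k:ℚ)+1) (d:ℚ) = (k:ℚ)+1 :=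
                  min_eq_left (by exact_mod_cast hkd)
                rw [hminl] at hmin
                exact ha_max (k+1) (by omega) hkd (by push_cast; exact hmin)
              · have hminr : min ((k:ℚ)+1) (d:ℚ) = (d:ℚ) :=
                  min_eq_right (by exact_mod_cast hkd.le)
                rw [hminr] at hmin
                exact hb_min (k+1) (by omega) hmin
        have lin : ∀ j, a ≤ j → j ≤ b → Q j = Q a + ((j:ℚ) - (a:ℚ)) * σ := by
          intro j hj
          induction j, hj using Nat.le_induction with
          | base => intro _; simp
          | succ k hk ih =>
            intro hkb
            have h1 := const k hk (by omega)
            have h2 := ih (by omega)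
            push_cast at h2 ⊢
            linear_combination h1 + h2
        have hab : a < b := by omega
        have hbaQ : (0:ℚ) < (b:ℚ) - (a:ℚ) := by
          have : (a:ℚ) < (b:ℚ) := by exact_mod_cast hab
          linarith
        have hσval : σ = ((d:ℚ) - (a:ℚ)) / ((b:ℚ) - (a:ℚ)) := by
          have h1 := lin b (by omega) le_rfl
          rw [hb_spec, ha_spec] at h1
          rw [eq_div_iff (ne_of_gt hbaQ)]
          linear_combination -h1
        refine ⟨(a, b), ?_, ?_⟩
        · simp only [hT, Finset.mem_union, Finset.mem_product, Finset.mem_range,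
            Finset.mem_Icc]
          left
          exact ⟨had, by omega, hb_le_n⟩
        · funext i
          obtain ⟨k, hk⟩ := i
          show Stmt1.g d a b k = P ⟨k, hk⟩
          rw [← hQ k (by omega)]
          rcases le_or_gt k a with h1 | h1
          · rw [Stmt1.g_low h1, low_eq k h1]
          · rcases le_or_gt b k with h2 | h2
            · rw [Stmt1.g_high (by omega) (by omega) h2, high_eq k h2 (by omega)]
            · rw [Stmt1.g_mid (by omega) (by omega), lin k (by omega) (by omega),
                ha_spec, hσval]
              ring
    · rintro ⟨⟨a, b⟩, hmem, rfl⟩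
      have hW := hWmem _ hmem
      refine ⟨?_, ?_, ?_, ?_, ?_⟩
      · show Stmt1.g d a b ((0 : Fin (n+1)) : ℕ) = 0
        rw [Fin.val_zero, Stmt1.g_low (Nat.zero_le a)]
        norm_num
      · show Stmt1.g d a b ((Fin.last n : Fin (n+1)) : ℕ) = (d:ℚ)
        rw [Fin.val_last]
        exact Stmt1.g_high hW.had hW.hdb (hW.hbn (by omega))
      · intro i h
        exact Stmt1.slope_anti_g hW (Nat.le_succ i)
      · intro i h
        exact Stmt1.g_le_min hW i
      · intro i h hne
        exact Stmt1.g_bp hW i hne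
  rw [key, Set.ncard_coe_finset]
  rw [Finset.card_image_of_injOn, hT]
  · rw [Finset.card_union_of_disjoint, Finset.card_product, Finset.card_range,
      Nat.card_Icc, Finset.card_singleton]
    · have : n + 1 - (d + 1) = n - d := by omega
      rw [this]
    · simp only [Finset.disjoint_singleton_right, Finset.mem_product, Finset.mem_range]
      intro hcon
      exact absurd hcon.1 (lt_irrefl d)
  · intro x hx y hy hxy
    have hWx := hWmem x (by exact_mod_cast hx)
    have hWy := hWmem y (by exact_mod_cast hy)
    have heq : ∀ i, i ≤ n → Stmt1.g d x.1 x.2 i = Stmt1.g d y.1 y.2 i := by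
      intro i hi
      have := congrFun hxy (⟨i, by omega⟩ : Fin (n+1))
      exact this
    obtain ⟨h1, h2⟩ := Stmt1.g_injW (by omega) hWx hWy heq
    exact Prod.ext h1 h2
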